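/- Let a, b ∈ ℝ. The system x − 2/x = a − 1/y + 1/(x+y), y − 2/y = b − 1/x + 1/(x+y) has a unique solution (x*, y*) with x* > 0 and y* > 0. Moreover, with x_1 = (a + √(a² + 8))/2, y_1 = (s + √(s² + 6))/2 where s = b − (|a| + √2)/2, and the recursion x_{n+1} = (A_n + √(A_n² + 8))/2 with A_n = a − 1/y_n + 1/(x_n + y_n), y_{n+1} = (B_n + √(B_n² + 8))/2 with B_n = b − 1/x_n + 1/(x_n + y_n), one has lim_{n→∞} x_n = x* and lim_{n→∞} y_n = y*. -/

import Mathlib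

open Filter

/-- The iterative scheme of Proposition 4.2: `dysonSeq a b n = (x_{n+1}, y_{n+1})`,
i.e. `dysonSeq a b 0` is the pair `(x_1, y_1)` of the proposition. -/
noncomputable def dysonSeq (a b : ℝ) : ℕ → ℝ × ℝ
  | 0 =>
      ((a + Real.sqrt (a ^ 2 + 8)) / 2,
        ((b - (|a| + Real.sqrt 2) / 2)
          + Real.sqrt ((b - (|a| + Real.sqrt 2) / 2) ^ 2 + 6)) / 2)
  | n + 1 =>
      let p := dysonSeq a b n
      let A := a - 1 / p.2 + 1 / (p.1 + p.2)
      let B := b - 1 / p.1 + 1 / (p.1 + p.2)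
      ((A + Real.sqrt (A ^ 2 + 8)) / 2, (B + Real.sqrt (B ^ 2 + 8)) / 2)

private lemma dys_pos (t c : ℝ) (hc : 0 < c) : 0 < (t + Real.sqrt (t^2 + c)) / 2 := by
  have h1 : t^2 < t^2 + c := by linarith
  have h2 : |t| < Real.sqrt (t^2 + c) := by
    rw [← Real.sqrt_sq_eq_abs]
    exact Real.sqrt_lt_sqrt (sq_nonneg t) h1
  have := neg_abs_le t
  linarith

private lemma dys_eq (t c : ℝ) (hc : 0 ≤ c) :
    ((t + Real.sqrt (t^2 + c))/2)^2 - t * ((t + Real.sqrt (t^2 + c))/2) - c/4 = 0 := by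
  have h : Real.sqrt (t^2 + c) ^ 2 = t^2 + c := Real.sq_sqrt (by positivity)
  linear_combination h / 4

private lemma dys_le {c u v : ℝ} (hu : 0 < u) (hv : 0 < v)
    (h1 : u^2 - c*u - 2 ≤ 0) (h2 : v^2 - c*v - 2 = 0) : u ≤ v := by
  have hcv : c*v = v^2 - 2 := by linarith
  have h1v : (u^2 - c*u - 2)*v ≤ 0 := mul_nonpos_of_nonpos_of_nonneg h1 hv.le
  have hcu : c*u*v = u*v^2 - 2*u := by linear_combination u*hcv
  have key : (u - v) * (u*v + 2) ≤ 0 := by nlinarith [h1v, hcu]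
  nlinarith [key, mul_pos hu hv]

noncomputable def dphi (t : ℝ) : ℝ := (t + Real.sqrt (t^2 + 8)) / 2

private lemma dphi_pos (t : ℝ) : 0 < dphi t := dys_pos t 8 (by norm_num)

private lemma dphi_eq (t : ℝ) : dphi t ^ 2 - t * dphi t - 2 = 0 := by
  have := dys_eq t 8 (by norm_num)
  unfold dphi
  linarith

private lemma dphi_mono {t u : ℝ} (h : t ≤ u) : dphi t ≤ dphi u := by
  have h1 := dphi_eq t
  have h2 := dphi_eq u
  have p1 := dphi_pos t
  have p2 := dphi_pos u
  exact dys_le p1 p2 (by nlinarith) h2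

private lemma dphi_inv_le (t : ℝ) : 1 / dphi t ≤ (|t| - t)/4 + Real.sqrt 2 / 2 := by
  have h1 := dphi_eq t
  have p1 := dphi_pos t
  have hs2 : Real.sqrt 2 ^ 2 = 2 := Real.sq_sqrt (by norm_num)
  have hs2n : 0 ≤ Real.sqrt 2 := Real.sqrt_nonneg 2
  have hsq : Real.sqrt (t^2+8) ≤ |t| + 2*Real.sqrt 2 := by
    have hle : t^2 + 8 ≤ (|t| + 2*Real.sqrt 2)^2 := by
      nlinarith [abs_nonneg t, sq_abs t]
    calc Real.sqrt (t^2+8) ≤ Real.sqrt ((|t| + 2*Real.sqrt 2)^2) := Real.sqrt_le_sqrt hle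
    _ = |t| + 2*Real.sqrt 2 := Real.sqrt_sq (by positivity)
  have hss : Real.sqrt (t^2+8)^2 = t^2+8 := Real.sq_sqrt (by positivity)
  have h2 : 1 / dphi t = (Real.sqrt (t^2+8) - t)/4 := by
    rw [div_eq_div_iff p1.ne' (by norm_num : (4:ℝ) ≠ 0)]
    unfold dphi
    linear_combination -hss/2
  rw [h2]
  linarith

private lemma frac_mono {x1 y1 x2 y2 : ℝ} (hx1 : 0 < x1) (hy1 : 0 < y1)
    (hx2 : 0 < x2) (hy2 : 0 < y2) (hx : x2 ≤ x1) (hy : y1 ≤ y2) :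
    x2/(y2*(x2+y2)) ≤ x1/(y1*(x1+y1)) := by
  rw [div_le_div_iff₀ (by positivity) (by positivity)]
  have k1 : x1*x2*y1 ≤ x1*x2*y2 := mul_le_mul_of_nonneg_left hy (by positivity)
  have k2 : y1*y1 ≤ y2*y2 := by nlinarith
  have k3 : x2*(y1*y1) ≤ x2*(y2*y2) := mul_le_mul_of_nonneg_left k2 hx2.le
  have k4 : x2*(y2*y2) ≤ x1*(y2*y2) := mul_le_mul_of_nonneg_right hx (by positivity)
  nlinarith [k1, k3, k4]

private lemma frac_id {x y : ℝ} (hx : 0 < x) (hy : 0 < y) :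
    1/y - 1/(x+y) = x/(y*(x+y)) := by
  field_simp
  ring

set_option maxHeartbeats 1000000 in
private lemma cycle_eq {a b p q P Q : ℝ} (hp : 0 < p) (hq : 0 < q) (hP : 0 < P) (hQ : 0 < Q)
    (e1 : P - 2/P = a - 1/q + 1/(p+q))
    (e2 : p - 2/p = a - 1/Q + 1/(P+Q))
    (e3 : Q - 2/Q = b - 1/p + 1/(p+q))
    (e4 : q - 2/q = b - 1/P + 1/(P+Q)) : P = p ∧ Q = q := by
  have hpq : 0 < p + q := by linarith
  have hPQ : 0 < P + Q := by linarith
  have hu : 0 < p*P := mul_pos hp hP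
  have hv : 0 < q*Q := mul_pos hq hQ
  have hw : 0 < (p+q)*(P+Q) := mul_pos hpq hPQ
  field_simp at e1 e2 e3 e4
  have h3w : ((P-p)*(p*P+1)*(q*Q) - (Q-q)*(q*Q+1)*(p*P)) * ((p+q)*(P+Q)) = 0 := by
    linear_combination (p*Q*(P+Q))*e1 - (P*q*(p+q))*e2 - (P*q*(P+Q))*e3 + (p*Q*(p+q))*e4
  have h4w : ((P-p)*(p*P+3)*(q*Q) + (Q-q)*(q*Q+3)*(p*P)) * ((p+q)*(P+Q))
      = 2*((P-p)+(Q-q))*((p*P)*(q*Q)) := by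
    linear_combination (p*Q*(P+Q))*e1 - (P*q*(p+q))*e2 + (P*q*(P+Q))*e3 - (p*Q*(p+q))*e4
  have h3 : (P-p)*(p*P+1)*(q*Q) = (Q-q)*(q*Q+1)*(p*P) := by
    have := (mul_eq_zero.mp h3w).resolve_right (ne_of_gt hw)
    linarith
  have hwge : p*P + q*Q ≤ (p+q)*(P+Q) := by nlinarith [mul_pos hp hQ, mul_pos hq hP]
  rcases lt_trichotomy P p with hlt | heq | hgt
  · exfalso
    have hα : P - p < 0 := by linarith
    have hβ : Q - q < 0 := by
      by_contra hc; push_neg at hc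
      have l1 : (P-p)*(p*P+1)*(q*Q) < 0 :=
        mul_neg_of_neg_of_pos (mul_neg_of_neg_of_pos hα (by linarith)) hv
      have l2 : (0:ℝ) ≤ (Q-q)*(q*Q+1)*(p*P) :=
        mul_nonneg (mul_nonneg hc (by positivity)) hu.le
      linarith [h3]
    have A0 : (p*P+3)*(q*Q)*(p*P+q*Q) ≤ (p*P+3)*(q*Q)*((p+q)*(P+Q)) :=
      mul_le_mul_of_nonneg_left hwge (by positivity)
    have A1 : (P-p)*((p*P+3)*(q*Q)*((p+q)*(P+Q))) ≤ (P-p)*((p*P+3)*(q*Q)*(p*P+q*Q)) :=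
      mul_le_mul_of_nonpos_left A0 hα.le
    have A2 : (P-p)*((p*P+3)*(q*Q)*(p*P+q*Q)) < (P-p)*(2*(p*P)*(q*Q)) :=
      mul_lt_mul_of_neg_left (by nlinarith [mul_pos hu hv, mul_pos (mul_pos hu hv) hu, mul_pos (mul_pos hu hv) hv, mul_pos hv hv]) hα
    have B0 : (q*Q+3)*(p*P)*(p*P+q*Q) ≤ (q*Q+3)*(p*P)*((p+q)*(P+Q)) :=
      mul_le_mul_of_nonneg_left hwge (by positivity)
    have B1 : (Q-q)*((q*Q+3)*(p*P)*((p+q)*(P+Q))) ≤ (Q-q)*((q*Q+3)*(p*P)*(p*P+q*Q)) :=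
      mul_le_mul_of_nonpos_left B0 hβ.le
    have B2 : (Q-q)*((q*Q+3)*(p*P)*(p*P+q*Q)) < (Q-q)*(2*(p*P)*(q*Q)) :=
      mul_lt_mul_of_neg_left (by nlinarith [mul_pos hu hv, mul_pos (mul_pos hu hv) hu, mul_pos (mul_pos hu hv) hv, mul_pos hv hv]) hβ
    linarith [h4w, A1, A2, B1, B2]
  · refine ⟨heq, ?_⟩
    have h0 : (Q-q)*(q*Q+1)*(p*P) = 0 := by rw [← h3, heq]; ring
    rcases mul_eq_zero.mp h0 with h' | h'
    · rcases mul_eq_zero.mp h' with h'' | h''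
      · linarith
      · exfalso; nlinarith [hv]
    · exfalso; nlinarith [hu]
  · exfalso
    have hα : 0 < P - p := by linarith
    have hβ : 0 < Q - q := by
      by_contra hc; push_neg at hc
      have l1 : 0 < (P-p)*(p*P+1)*(q*Q) :=
        mul_pos (mul_pos hα (by linarith)) hv
      have l2 : (Q-q)*(q*Q+1)*(p*P) ≤ 0 :=
        mul_nonpos_of_nonpos_of_nonneg (mul_nonpos_of_nonpos_of_nonneg hc (by positivity)) hu.le
      linarith [h3]
    have A0 : (p*P+3)*(q*Q)*(p*P+q*Q) ≤ (p*P+3)*(q*Q)*((p+q)*(P+Q)) :=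
      mul_le_mul_of_nonneg_left hwge (by positivity)
    have A1 : (P-p)*((p*P+3)*(q*Q)*(p*P+q*Q)) ≤ (P-p)*((p*P+3)*(q*Q)*((p+q)*(P+Q))) :=
      mul_le_mul_of_nonneg_left A0 hα.le
    have A2 : (P-p)*(2*(p*P)*(q*Q)) < (P-p)*((p*P+3)*(q*Q)*(p*P+q*Q)) :=
      mul_lt_mul_of_pos_left (by nlinarith [mul_pos hu hv, mul_pos (mul_pos hu hv) hu, mul_pos (mul_pos hu hv) hv, mul_pos hv hv]) hα
    have B0 : (q*Q+3)*(p*P)*(p*P+q*Q) ≤ (q*Q+3)*(p*P)*((p+q)*(P+Q)) :=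
      mul_le_mul_of_nonneg_left hwge (by positivity)
    have B1 : (Q-q)*((q*Q+3)*(p*P)*(p*P+q*Q)) ≤ (Q-q)*((q*Q+3)*(p*P)*((p+q)*(P+Q))) :=
      mul_le_mul_of_nonneg_left B0 hβ.le
    have B2 : (Q-q)*(2*(p*P)*(q*Q)) < (Q-q)*((q*Q+3)*(p*P)*(p*P+q*Q)) :=
      mul_lt_mul_of_pos_left (by nlinarith [mul_pos hu hv, mul_pos (mul_pos hu hv) hu, mul_pos (mul_pos hu hv) hv, mul_pos hv hv]) hβ
    linarith [h4w, A1, A2, B1, B2]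

set_option maxHeartbeats 1000000 in
private lemma fixed_eq {a b p q P Q : ℝ} (hp : 0 < p) (hq : 0 < q) (hP : 0 < P) (hQ : 0 < Q)
    (f1 : p - 2/p = a - 1/q + 1/(p+q))
    (f2 : P - 2/P = a - 1/Q + 1/(P+Q))
    (f3 : q - 2/q = b - 1/p + 1/(p+q))
    (f4 : Q - 2/Q = b - 1/P + 1/(P+Q)) : P = p ∧ Q = q := by
  have hpq : 0 < p + q := by linarith
  have hPQ : 0 < P + Q := by linarith
  have hu : 0 < p*P := mul_pos hp hP
  have hv : 0 < q*Q := mul_pos hq hQ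
  have hw : 0 < (p+q)*(P+Q) := mul_pos hpq hPQ
  field_simp at f1 f2 f3 f4
  have g5w : ((P-p)*(p*P+3)*(q*Q) - (Q-q)*(q*Q+3)*(p*P)) * ((p+q)*(P+Q)) = 0 := by
    linear_combination (p*q*(p+q))*f2 - (P*Q*(P+Q))*f1 - ((p*q*(p+q))*f4 - (P*Q*(P+Q))*f3)
  have g6 : ((P-p)*(p*P+1)*(q*Q) + (Q-q)*(q*Q+1)*(p*P)) * ((p+q)*(P+Q))
      = -(2*((P-p)+(Q-q))*((p*P)*(q*Q))) := by
    linear_combination (p*q*(p+q))*f2 - (P*Q*(P+Q))*f1 + ((p*q*(p+q))*f4 - (P*Q*(P+Q))*f3)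
  have g5 : (P-p)*(p*P+3)*(q*Q) = (Q-q)*(q*Q+3)*(p*P) := by
    have := (mul_eq_zero.mp g5w).resolve_right (ne_of_gt hw)
    linarith
  rcases lt_trichotomy P p with hlt | heq | hgt
  · exfalso
    have hα : P - p < 0 := by linarith
    have hβ : Q - q < 0 := by
      by_contra hc; push_neg at hc
      have l1 : (P-p)*(p*P+3)*(q*Q) < 0 :=
        mul_neg_of_neg_of_pos (mul_neg_of_neg_of_pos hα (by linarith)) hv
      have l2 : (0:ℝ) ≤ (Q-q)*(q*Q+3)*(p*P) :=
        mul_nonneg (mul_nonneg hc (by positivity)) hu.le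
      linarith [g5]
    have l1 : (P-p)*(p*P+1)*(q*Q) < 0 :=
      mul_neg_of_neg_of_pos (mul_neg_of_neg_of_pos hα (by linarith)) hv
    have l2 : (Q-q)*(q*Q+1)*(p*P) < 0 :=
      mul_neg_of_neg_of_pos (mul_neg_of_neg_of_pos hβ (by linarith)) hu
    have l3 : ((P-p)*(p*P+1)*(q*Q) + (Q-q)*(q*Q+1)*(p*P)) * ((p+q)*(P+Q)) < 0 :=
      mul_neg_of_neg_of_pos (by linarith) hw
    have r : 0 < (-(P-p+(Q-q))) * ((p*P)*(q*Q)) :=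
      mul_pos (by linarith) (mul_pos hu hv)
    nlinarith [g6, l3, r]
  · refine ⟨heq, ?_⟩
    have h0 : (Q-q)*(q*Q+3)*(p*P) = 0 := by rw [← g5, heq]; ring
    rcases mul_eq_zero.mp h0 with h' | h'
    · rcases mul_eq_zero.mp h' with h'' | h''
      · linarith
      · exfalso; nlinarith [hv]
    · exfalso; nlinarith [hu]
  · exfalso
    have hα : 0 < P - p := by linarith
    have hβ : 0 < Q - q := by
      by_contra hc; push_neg at hc
      have l1 : 0 < (P-p)*(p*P+3)*(q*Q) :=
        mul_pos (mul_pos hα (by linarith)) hv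
      have l2 : (Q-q)*(q*Q+3)*(p*P) ≤ 0 :=
        mul_nonpos_of_nonpos_of_nonneg (mul_nonpos_of_nonpos_of_nonneg hc (by positivity)) hu.le
      linarith [g5]
    have l1 : 0 < (P-p)*(p*P+1)*(q*Q) :=
      mul_pos (mul_pos hα (by linarith)) hv
    have l2 : 0 < (Q-q)*(q*Q+1)*(p*P) :=
      mul_pos (mul_pos hβ (by linarith)) hu
    have l3 : 0 < ((P-p)*(p*P+1)*(q*Q) + (Q-q)*(q*Q+1)*(p*P)) * ((p+q)*(P+Q)) :=
      mul_pos (by linarith) hw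
    have r : 0 < (P-p+(Q-q)) * ((p*P)*(q*Q)) :=
      mul_pos (by linarith) (mul_pos hu hv)
    nlinarith [g6, l3, r]

private lemma poly_to_eq {c X : ℝ} (hX : 0 < X) (h : X^2 - c*X - 2 = 0) : X - 2/X = c := by
  field_simp
  linear_combination h

private lemma tendsto_even_odd {f : ℕ → ℝ} {L : ℝ}
    (he : Tendsto (fun k => f (2*k)) atTop (nhds L))
    (ho : Tendsto (fun k => f (2*k+1)) atTop (nhds L)) :
    Tendsto f atTop (nhds L) := by
  rw [Metric.tendsto_atTop] at he ho ⊢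
  intro ε hε
  obtain ⟨N1, h1⟩ := he ε hε
  obtain ⟨N2, h2⟩ := ho ε hε
  refine ⟨2*N1+2*N2+2, fun n hn => ?_⟩
  rcases Nat.even_or_odd n with ⟨k, hk⟩ | ⟨k, hk⟩
  · have hnk : n = 2*k := by omega
    rw [hnk]; exact h1 k (by omega)
  · have hnk : n = 2*k+1 := by omega
    rw [hnk]; exact h2 k (by omega)

set_option maxHeartbeats 2000000 in
/-- Proposition 4.2 of the paper. The system
`x - 2/x = a - 1/y + 1/(x+y)`, `y - 2/y = b - 1/x + 1/(x+y)` has a unique positive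
solution `(x*, y*)`, and the iterates `(x_n, y_n)` converge to it. -/
theorem dyson_three_particle_unique_solution_and_iteration (a b : ℝ) :
    ∃ xs ys : ℝ, 0 < xs ∧ 0 < ys ∧
      xs - 2 / xs = a - 1 / ys + 1 / (xs + ys) ∧
      ys - 2 / ys = b - 1 / xs + 1 / (xs + ys) ∧
      (∀ x y : ℝ, 0 < x → 0 < y →
        x - 2 / x = a - 1 / y + 1 / (x + y) →
        y - 2 / y = b - 1 / x + 1 / (x + y) → x = xs ∧ y = ys) ∧
      Tendsto (fun n : ℕ => (dysonSeq a b n).1) atTop (nhds xs) ∧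
      Tendsto (fun n : ℕ => (dysonSeq a b n).2) atTop (nhds ys) := by
  set x : ℕ → ℝ := fun n => (dysonSeq a b n).1 with hxdef
  set y : ℕ → ℝ := fun n => (dysonSeq a b n).2 with hydef
  set s : ℝ := b - (|a| + Real.sqrt 2)/2 with hsdef
  have hx0 : x 0 = dphi a := rfl
  have hy0 : y 0 = (s + Real.sqrt (s^2+6))/2 := rfl
  have hxs : ∀ n, x (n+1) = dphi (a - 1/(y n) + 1/(x n + y n)) := fun n => rfl
  have hys : ∀ n, y (n+1) = dphi (b - 1/(x n) + 1/(x n + y n)) := fun n => rfl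
  have hxp : ∀ n, 0 < x n := by
    intro n; cases n with
    | zero => rw [hx0]; exact dphi_pos a
    | succ n => rw [hxs]; exact dphi_pos _
  have hyp : ∀ n, 0 < y n := by
    intro n; cases n with
    | zero => rw [hy0]; exact dys_pos s 6 (by norm_num)
    | succ n => rw [hys]; exact dphi_pos _
  have hy0q : y 0 ^2 - s * y 0 - 3/2 = 0 := by
    have := dys_eq s 6 (by norm_num)
    rw [hy0]; linarith
  -- upper bounds
  have hAle : ∀ n, a - 1/(y n) + 1/(x n + y n) ≤ a := by
    intro n
    have := one_div_le_one_div_of_le (hyp n) (by linarith [hxp n] : y n ≤ x n + y n)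
    linarith
  have hBle : ∀ n, b - 1/(x n) + 1/(x n + y n) ≤ b := by
    intro n
    have := one_div_le_one_div_of_le (hxp n) (by linarith [hyp n] : x n ≤ x n + y n)
    linarith
  have hxub : ∀ n, x n ≤ dphi a := by
    intro n; cases n with
    | zero => rw [hx0]
    | succ n => rw [hxs]; exact dphi_mono (hAle n)
  have hyub : ∀ n, y n ≤ dphi b := by
    intro n; cases n with
    | zero =>
      apply dys_le (hyp 0) (dphi_pos b) ?_ (dphi_eq b)
      have hnn : 0 ≤ (|a| + Real.sqrt 2)/2 := by positivity
      nlinarith [hy0q, hyp 0, mul_nonneg hnn (hyp 0).le]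
    | succ n => rw [hys]; exact dphi_mono (hBle n)
  -- key inverse bound
  have hinv : 1 / dphi (a - 1/(y 0)) ≤ (|a| + Real.sqrt 2)/2 + 1/(2*(y 0)) := by
    have h := dphi_inv_le (a - 1/(y 0))
    have hy0p := hyp 0
    have hiy : 0 < 1/(y 0) := by positivity
    have h2 : |a - 1/(y 0)| ≤ |a| + 1/(y 0) := by
      calc |a - 1/(y 0)| = |a + (-(1/(y 0)))| := by ring_nf
      _ ≤ |a| + |(-(1/(y 0)))| := abs_add_le _ _
      _ = |a| + 1/(y 0) := by rw [abs_neg, abs_of_pos hiy]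
    have h3 : -(a - 1/(y 0)) ≤ |a| + 1/(y 0) := by
      have := neg_abs_le a; have := le_abs_self a; linarith
    have h4 : (|a - 1/(y 0)| - (a - 1/(y 0)))/4 ≤ (|a| + 1/(y 0))/2 := by linarith
    have h5 : (|a| + 1/(y 0))/2 + Real.sqrt 2/2 = (|a| + Real.sqrt 2)/2 + 1/(2*(y 0)) := by
      field_simp; ring
    linarith
  -- lower bounds
  have hlow : ∀ n, y 0 ≤ y n ∧ dphi (a - 1/(y 0)) ≤ x n := by
    intro n; induction n with
    | zero =>
      refine ⟨le_refl _, ?_⟩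
      rw [hx0]
      exact dphi_mono (by linarith [one_div_pos.mpr (hyp 0)])
    | succ n ih =>
      obtain ⟨ihy, ihx⟩ := ih
      have hxnp := hxp n
      have hynp := hyp n
      constructor
      · rw [hys]
        apply dys_le (hyp 0) (dphi_pos _) ?_ (dphi_eq _)
        have h1 : 1/(x n) ≤ 1/(dphi (a - 1/(y 0))) :=
          one_div_le_one_div_of_le (dphi_pos _) ihx
        have h2 : 0 < 1/(x n + y n) := by positivity
        have hB : s - 1/(2*(y 0)) ≤ b - 1/(x n) + 1/(x n + y n) := by
          rw [hsdef]; linarith [hinv]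
        have h4 : (s - (b - 1/(x n) + 1/(x n + y n))) * (y 0) ≤ (1/(2*(y 0))) * (y 0) :=
          mul_le_mul_of_nonneg_right (by linarith) (hyp 0).le
        have h5 : (1/(2*(y 0))) * (y 0) = 1/2 := by
          rw [div_mul_eq_mul_div,
            div_eq_div_iff (ne_of_gt (by linarith [hyp 0] : (0:ℝ) < 2*(y 0))) (by norm_num : (2:ℝ) ≠ 0)]
          ring
        nlinarith [hy0q, h4, h5]
      · rw [hxs]
        apply dphi_mono
        have h1 : 1/(y n) ≤ 1/(y 0) := one_div_le_one_div_of_le (hyp 0) ihy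
        have h2 : 0 < 1/(x n + y n) := by positivity
        linarith
  -- antitone step
  have hstep2 : ∀ m n, x m ≤ x n → y n ≤ y m →
      x (n+1) ≤ x (m+1) ∧ y (m+1) ≤ y (n+1) := by
    intro m n hxmn hynm
    have fm := frac_mono (hxp n) (hyp n) (hxp m) (hyp m) hxmn hynm
    have gm := frac_mono (hyp m) (hxp m) (hyp n) (hxp n) hynm hxmn
    constructor
    · rw [hxs, hxs]
      apply dphi_mono
      have e1 := frac_id (hxp m) (hyp m)
      have e2 := frac_id (hxp n) (hyp n)
      linarith
    · rw [hys, hys]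
      apply dphi_mono
      have e1 := frac_id (hyp m) (hxp m)
      have e2 := frac_id (hyp n) (hxp n)
      have c1 : x m + y m = y m + x m := by ring
      have c2 : x n + y n = y n + x n := by ring
      rw [c1, c2]
      linarith
  -- pair induction: even decreasing-x / increasing-y ; odd increasing-x / decreasing-y
  have hpair : ∀ k, (x (2*k+2) ≤ x (2*k) ∧ y (2*k) ≤ y (2*k+2)) ∧
      (x (2*k+1) ≤ x (2*k+3) ∧ y (2*k+3) ≤ y (2*k+1)) := by
    intro k; induction k with
    | zero =>
      have base1 : x 2 ≤ x 0 := by rw [hx0]; exact hxub 2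
      have base2 : y 0 ≤ y 2 := (hlow 2).1
      have h1 := hstep2 2 0 base1 base2
      exact ⟨⟨base1, base2⟩, h1⟩
    | succ k ih =>
      obtain ⟨h1, h2⟩ := ih
      have h3 := hstep2 (2*k+1) (2*k+3) h2.1 h2.2
      have e1 : 2*k+3+1 = 2*k+4 := by ring
      rw [e1] at h3
      have h4 := hstep2 (2*k+4) (2*k+2) h3.1 h3.2
      refine ⟨⟨?_, ?_⟩, ?_, ?_⟩
      · rw [show 2*(k+1)+2 = 2*k+4 from by ring, show 2*(k+1) = 2*k+2 from by ring]
        exact h3.1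
      · rw [show 2*(k+1)+2 = 2*k+4 from by ring, show 2*(k+1) = 2*k+2 from by ring]
        exact h3.2
      · rw [show 2*(k+1)+1 = 2*k+2+1 from by ring, show 2*(k+1)+3 = 2*k+4+1 from by ring]
        exact h4.1
      · rw [show 2*(k+1)+1 = 2*k+2+1 from by ring, show 2*(k+1)+3 = 2*k+4+1 from by ring]
        exact h4.2
  -- monotone subsequences
  have hxe_anti : Antitone (fun k => x (2*k)) := by
    apply antitone_nat_of_succ_le
    intro k
    have := (hpair k).1.1
    have e : 2*(k+1) = 2*k+2 := by ring
    simpa [e] using this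
  have hye_mono : Monotone (fun k => y (2*k)) := by
    apply monotone_nat_of_le_succ
    intro k
    have := (hpair k).1.2
    have e : 2*(k+1) = 2*k+2 := by ring
    simpa [e] using this
  have hxo_mono : Monotone (fun k => x (2*k+1)) := by
    apply monotone_nat_of_le_succ
    intro k
    have := (hpair k).2.1
    have e : 2*(k+1)+1 = 2*k+3 := by ring
    simpa [e] using this
  have hyo_anti : Antitone (fun k => y (2*k+1)) := by
    apply antitone_nat_of_succ_le
    intro k
    have := (hpair k).2.2
    have e : 2*(k+1)+1 = 2*k+3 := by ring
    simpa [e] using this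
  -- boundedness
  have hbb1 : BddBelow (Set.range fun k => x (2*k)) := by
    refine ⟨dphi (a - 1/(y 0)), ?_⟩
    rintro _ ⟨k, rfl⟩; exact (hlow _).2
  have hbb2 : BddAbove (Set.range fun k => y (2*k)) := by
    refine ⟨dphi b, ?_⟩
    rintro _ ⟨k, rfl⟩; exact hyub _
  have hbb3 : BddAbove (Set.range fun k => x (2*k+1)) := by
    refine ⟨dphi a, ?_⟩
    rintro _ ⟨k, rfl⟩; exact hxub _
  have hbb4 : BddBelow (Set.range fun k => y (2*k+1)) := by
    refine ⟨y 0, ?_⟩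
    rintro _ ⟨k, rfl⟩; exact (hlow _).1
  -- limits
  set p : ℝ := ⨅ k, x (2*k) with hpdef
  set q : ℝ := ⨆ k, y (2*k) with hqdef
  set P : ℝ := ⨆ k, x (2*k+1) with hPdef
  set Q : ℝ := ⨅ k, y (2*k+1) with hQdef
  have hpt : Tendsto (fun k => x (2*k)) atTop (nhds p) := tendsto_atTop_ciInf hxe_anti hbb1
  have hqt : Tendsto (fun k => y (2*k)) atTop (nhds q) := tendsto_atTop_ciSup hye_mono hbb2
  have hPt : Tendsto (fun k => x (2*k+1)) atTop (nhds P) := tendsto_atTop_ciSup hxo_mono hbb3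
  have hQt : Tendsto (fun k => y (2*k+1)) atTop (nhds Q) := tendsto_atTop_ciInf hyo_anti hbb4
  have hp_lb : dphi (a - 1/(y 0)) ≤ p := le_ciInf (fun k => (hlow _).2)
  have hq_lb : y 0 ≤ q := by
    have h : y (2*0) ≤ q := le_ciSup hbb2 0
    rw [show 2*0 = 0 from by norm_num] at h
    exact h
  have hP_lb : dphi (a - 1/(y 0)) ≤ P := by
    have h1 : x (2*0+1) ≤ P := le_ciSup hbb3 0
    rw [show 2*0+1 = 1 from by norm_num] at h1
    exact le_trans (hlow 1).2 h1
  have hQ_lb : y 0 ≤ Q := le_ciInf (fun k => (hlow _).1)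
  have hpp : 0 < p := lt_of_lt_of_le (dphi_pos _) hp_lb
  have hqp : 0 < q := lt_of_lt_of_le (hyp 0) hq_lb
  have hPp : 0 < P := lt_of_lt_of_le (dphi_pos _) hP_lb
  have hQp : 0 < Q := lt_of_lt_of_le (hyp 0) hQ_lb
  -- limit tendsto's for shifted even indices
  have hpt2 : Tendsto (fun k => x (2*k+2)) atTop (nhds p) := by
    have h := hpt.comp (tendsto_add_atTop_nat 1)
    exact h.congr (fun k => by simp only [Function.comp_apply]; congr 1)
  have hqt2 : Tendsto (fun k => y (2*k+2)) atTop (nhds q) := by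
    have h := hqt.comp (tendsto_add_atTop_nat 1)
    exact h.congr (fun k => by simp only [Function.comp_apply]; congr 1)
  -- limit equations
  have hAe : Tendsto (fun k => a - 1/(y (2*k)) + 1/(x (2*k) + y (2*k))) atTop
      (nhds (a - 1/q + 1/(p+q))) := by
    have h1 : Tendsto (fun k => (1:ℝ)/(y (2*k))) atTop (nhds (1/q)) :=
      tendsto_const_nhds.div hqt (ne_of_gt hqp)
    have h2 : Tendsto (fun k => (1:ℝ)/(x (2*k) + y (2*k))) atTop (nhds (1/(p+q))) :=
      tendsto_const_nhds.div (hpt.add hqt) (ne_of_gt (by linarith))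
    exact (tendsto_const_nhds.sub h1).add h2
  have hBe : Tendsto (fun k => b - 1/(x (2*k)) + 1/(x (2*k) + y (2*k))) atTop
      (nhds (b - 1/p + 1/(p+q))) := by
    have h1 : Tendsto (fun k => (1:ℝ)/(x (2*k))) atTop (nhds (1/p)) :=
      tendsto_const_nhds.div hpt (ne_of_gt hpp)
    have h2 : Tendsto (fun k => (1:ℝ)/(x (2*k) + y (2*k))) atTop (nhds (1/(p+q))) :=
      tendsto_const_nhds.div (hpt.add hqt) (ne_of_gt (by linarith))
    exact (tendsto_const_nhds.sub h1).add h2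
  have hAo : Tendsto (fun k => a - 1/(y (2*k+1)) + 1/(x (2*k+1) + y (2*k+1))) atTop
      (nhds (a - 1/Q + 1/(P+Q))) := by
    have h1 : Tendsto (fun k => (1:ℝ)/(y (2*k+1))) atTop (nhds (1/Q)) :=
      tendsto_const_nhds.div hQt (ne_of_gt hQp)
    have h2 : Tendsto (fun k => (1:ℝ)/(x (2*k+1) + y (2*k+1))) atTop (nhds (1/(P+Q))) :=
      tendsto_const_nhds.div (hPt.add hQt) (ne_of_gt (by linarith))
    exact (tendsto_const_nhds.sub h1).add h2
  have hBo : Tendsto (fun k => b - 1/(x (2*k+1)) + 1/(x (2*k+1) + y (2*k+1))) atTop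
      (nhds (b - 1/P + 1/(P+Q))) := by
    have h1 : Tendsto (fun k => (1:ℝ)/(x (2*k+1))) atTop (nhds (1/P)) :=
      tendsto_const_nhds.div hPt (ne_of_gt hPp)
    have h2 : Tendsto (fun k => (1:ℝ)/(x (2*k+1) + y (2*k+1))) atTop (nhds (1/(P+Q))) :=
      tendsto_const_nhds.div (hPt.add hQt) (ne_of_gt (by linarith))
    exact (tendsto_const_nhds.sub h1).add h2
  have heq1 : P^2 - (a - 1/q + 1/(p+q))*P - 2 = 0 := by
    have hz : Tendsto (fun k => x (2*k+1)^2
        - (a - 1/(y (2*k)) + 1/(x (2*k) + y (2*k)))*x (2*k+1) - 2) atTop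
        (nhds (P^2 - (a - 1/q + 1/(p+q))*P - 2)) :=
      ((hPt.pow 2).sub (hAe.mul hPt)).sub tendsto_const_nhds
    have hz0 : Tendsto (fun k => x (2*k+1)^2
        - (a - 1/(y (2*k)) + 1/(x (2*k) + y (2*k)))*x (2*k+1) - 2) atTop (nhds 0) := by
      apply Tendsto.congr (f₁ := fun _ => (0:ℝ)) ?_ tendsto_const_nhds
      intro k
      have hx1 := hxs (2*k)
      rw [hx1]
      have := dphi_eq (a - 1/(y (2*k)) + 1/(x (2*k) + y (2*k)))
      linarith
    have := tendsto_nhds_unique hz hz0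
    linarith
  have heq2 : Q^2 - (b - 1/p + 1/(p+q))*Q - 2 = 0 := by
    have hz : Tendsto (fun k => y (2*k+1)^2
        - (b - 1/(x (2*k)) + 1/(x (2*k) + y (2*k)))*y (2*k+1) - 2) atTop
        (nhds (Q^2 - (b - 1/p + 1/(p+q))*Q - 2)) :=
      ((hQt.pow 2).sub (hBe.mul hQt)).sub tendsto_const_nhds
    have hz0 : Tendsto (fun k => y (2*k+1)^2
        - (b - 1/(x (2*k)) + 1/(x (2*k) + y (2*k)))*y (2*k+1) - 2) atTop (nhds 0) := by
      apply Tendsto.congr (f₁ := fun _ => (0:ℝ)) ?_ tendsto_const_nhds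
      intro k
      have hy1 := hys (2*k)
      rw [hy1]
      have := dphi_eq (b - 1/(x (2*k)) + 1/(x (2*k) + y (2*k)))
      linarith
    have := tendsto_nhds_unique hz hz0
    linarith
  have heq3 : p^2 - (a - 1/Q + 1/(P+Q))*p - 2 = 0 := by
    have hz : Tendsto (fun k => x (2*k+2)^2
        - (a - 1/(y (2*k+1)) + 1/(x (2*k+1) + y (2*k+1)))*x (2*k+2) - 2) atTop
        (nhds (p^2 - (a - 1/Q + 1/(P+Q))*p - 2)) :=
      ((hpt2.pow 2).sub (hAo.mul hpt2)).sub tendsto_const_nhds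
    have hz0 : Tendsto (fun k => x (2*k+2)^2
        - (a - 1/(y (2*k+1)) + 1/(x (2*k+1) + y (2*k+1)))*x (2*k+2) - 2) atTop (nhds 0) := by
      apply Tendsto.congr (f₁ := fun _ => (0:ℝ)) ?_ tendsto_const_nhds
      intro k
      have hx1 := hxs (2*k+1)
      have e : 2*k+1+1 = 2*k+2 := by ring
      rw [e] at hx1
      rw [hx1]
      have := dphi_eq (a - 1/(y (2*k+1)) + 1/(x (2*k+1) + y (2*k+1)))
      linarith
    have := tendsto_nhds_unique hz hz0
    linarith
  have heq4 : q^2 - (b - 1/P + 1/(P+Q))*q - 2 = 0 := by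
    have hz : Tendsto (fun k => y (2*k+2)^2
        - (b - 1/(x (2*k+1)) + 1/(x (2*k+1) + y (2*k+1)))*y (2*k+2) - 2) atTop
        (nhds (q^2 - (b - 1/P + 1/(P+Q))*q - 2)) :=
      ((hqt2.pow 2).sub (hBo.mul hqt2)).sub tendsto_const_nhds
    have hz0 : Tendsto (fun k => y (2*k+2)^2
        - (b - 1/(x (2*k+1)) + 1/(x (2*k+1) + y (2*k+1)))*y (2*k+2) - 2) atTop (nhds 0) := by
      apply Tendsto.congr (f₁ := fun _ => (0:ℝ)) ?_ tendsto_const_nhds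
      intro k
      have hy1 := hys (2*k+1)
      have e : 2*k+1+1 = 2*k+2 := by ring
      rw [e] at hy1
      rw [hy1]
      have := dphi_eq (b - 1/(x (2*k+1)) + 1/(x (2*k+1) + y (2*k+1)))
      linarith
    have := tendsto_nhds_unique hz hz0
    linarith
  have E1 : P - 2/P = a - 1/q + 1/(p+q) := poly_to_eq hPp heq1
  have E2 : p - 2/p = a - 1/Q + 1/(P+Q) := poly_to_eq hpp heq3
  have E3 : Q - 2/Q = b - 1/p + 1/(p+q) := poly_to_eq hQp heq2
  have E4 : q - 2/q = b - 1/P + 1/(P+Q) := poly_to_eq hqp heq4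
  obtain ⟨hPep, hQeq⟩ := cycle_eq hpp hqp hPp hQp E1 E2 E3 E4
  -- solution equations
  have sol1 : p - 2/p = a - 1/q + 1/(p+q) := by rw [hPep, hQeq] at E2; exact E2
  have sol2 : q - 2/q = b - 1/p + 1/(p+q) := by rw [hPep, hQeq] at E4; exact E4
  refine ⟨p, q, hpp, hqp, sol1, sol2, ?_, ?_, ?_⟩
  · -- uniqueness
    intro x' y' hx' hy' hxe hye
    exact fixed_eq hpp hqp hx' hy' sol1 hxe sol2 hye
  · -- x tendsto
    apply tendsto_even_odd hpt
    rw [hPep] at hPt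
    exact hPt
  · -- y tendsto
    apply tendsto_even_odd hqt
    rw [hQeq] at hQt
    exact hQt
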